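/- The function b(r) = 2r/((1 + r²)²·arctan(r)) for r > 0 (extended continuously by b(0) = 2) is an SL-bifurcator: the solution of w'' + b(r)·w = 0 with w(0) = 0, w'(0) = 1 is monotone increasing and bounded on [0,∞). -/

import Mathlib

open Real Set

lemma second_deriv_arctan (r : ℝ) :
    deriv (deriv Real.arctan) r = -(2 * r) / (1 + r ^ 2) ^ 2 := by
  rw [Real.deriv_arctan]
  have h : ∀ x : ℝ, (1 : ℝ) + x ^ 2 ≠ 0 := fun x => by positivity
  have H : HasDerivAt (fun x : ℝ => 1 / (1 + x ^ 2)) (-(2 * r) / (1 + r ^ 2) ^ 2) r := by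
    have h1 : HasDerivAt (fun x : ℝ => 1 + x ^ 2) (2 * r) r := by
      simpa using (hasDerivAt_pow 2 r).const_add 1
    have h2 := h1.inv (h r)
    have : -(2 * r) / ((1 + r ^ 2) ^ 2) = -(2 * r) / (1 + r ^ 2) ^ 2 := rfl
    simpa [one_div, neg_div, Pi.inv_def] using h2
  exact H.deriv

/-- The function `b r = 2r / ((1 + r²)² arctan r)` (with `b 0 = 2`) is an SL-bifurcator:
the solution of `w'' + b w = 0`, `w 0 = 0`, `w' 0 = 1` is monotone increasing and
bounded on `[0, ∞)`. -/
theorem stmt_9 :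
    ∃ w : ℝ → ℝ,
      ContDiff ℝ 2 w ∧
      (∀ r : ℝ, 0 ≤ r →
        deriv (deriv w) r
          + (if r = 0 then (2 : ℝ)
              else 2 * r / ((1 + r ^ 2) ^ 2 * Real.arctan r)) * w r = 0) ∧
      w 0 = 0 ∧ deriv w 0 = 1 ∧
      MonotoneOn w (Set.Ici 0) ∧ BddAbove (w '' Set.Ici 0) := by
  refine ⟨Real.arctan, Real.contDiff_arctan, ?_, Real.arctan_zero, ?_, ?_, ?_⟩
  · intro r hr
    rw [second_deriv_arctan]
    rcases eq_or_lt_of_le hr with h0 | h0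
    · simp [← h0]
    · rw [if_neg h0.ne']
      have ha : Real.arctan r ≠ 0 := by
        have : Real.arctan 0 < Real.arctan r := Real.arctan_strictMono h0
        simpa using this.ne'
      have hb : ((1 : ℝ) + r ^ 2) ^ 2 ≠ 0 := by positivity
      field_simp
      ring
  · rw [Real.deriv_arctan]; norm_num
  · exact Real.arctan_strictMono.monotone.monotoneOn _
  · exact ⟨π / 2, fun y ⟨x, _, hx⟩ => hx ▸ (Real.arctan_lt_pi_div_two x).le⟩
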